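/- (One-sided linear growth of the truncated generator.) For every y ∈ ℝ and z ∈ ℝ^d, y·h(y,z) ≤ |y|·|f(0,0)| + λ·|y|·‖z‖, where h(y,z) := θ(y)·(f(y, q_n(z)) − f(0,0))·c + f(0,0). -/

import Mathlib

/-- The truncation `q_n(z) = z · n/(‖z‖ ∨ n)`. -/
noncomputable def trunc {d : ℕ} (n : ℕ) (z : EuclideanSpace ℝ (Fin d)) :
    EuclideanSpace ℝ (Fin d) :=
  ((n : ℝ) / max ‖z‖ (n : ℝ)) • z

/-- one-sided linear growth of the truncated generator
`h(y,z) = θ(y)·(f(y, q_n(z)) − f(0,0))·c + f(0,0)`: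
`y·h(y,z) ≤ |y|·|f(0,0)| + λ·|y|·‖z‖`. -/
theorem truncated_generator_one_sided_growth
    (d : ℕ) (l : ℝ) (hl : 0 ≤ l)
    (f : ℝ → EuclideanSpace ℝ (Fin d) → ℝ)
    (hLip : ∀ y z z', |f y z - f y z'| ≤ l * ‖z - z'‖)
    (hMono : ∀ y y' z, (y - y') * (f y z - f y' z) ≤ 0)
    (θ : ℝ → ℝ) (hθ0 : ∀ y, 0 ≤ θ y) (hθ1 : ∀ y, θ y ≤ 1)
    (c : ℝ) (hc0 : 0 ≤ c) (hc1 : c ≤ 1)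
    (n : ℕ) (hn : 1 ≤ n) :
    ∀ (y : ℝ) (z : EuclideanSpace ℝ (Fin d)),
      y * (θ y * (f y (trunc n z) - f 0 0) * c + f 0 0) ≤
        |y| * |f 0 0| + l * |y| * ‖z‖ := by
  intro y z
  set q := trunc n z with hq
  have hnpos : (0:ℝ) < n := by exact_mod_cast hn
  have hqnorm : ‖q‖ ≤ ‖z‖ := by
    have hmax : (n:ℝ) ≤ max ‖z‖ (n:ℝ) := le_max_right _ _
    have hratio0 : 0 ≤ (n:ℝ) / max ‖z‖ (n:ℝ) :=
      div_nonneg hnpos.le (le_trans hnpos.le hmax)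
    have hratio1 : (n:ℝ) / max ‖z‖ (n:ℝ) ≤ 1 :=
      div_le_one_of_le₀ hmax (le_trans hnpos.le hmax)
    calc ‖q‖ = |(n:ℝ) / max ‖z‖ (n:ℝ)| * ‖z‖ := by
          rw [hq, trunc, norm_smul, Real.norm_eq_abs]
      _ ≤ 1 * ‖z‖ := by
          apply mul_le_mul_of_nonneg_right _ (norm_nonneg z)
          rw [abs_of_nonneg hratio0]; exact hratio1
      _ = ‖z‖ := one_mul _
  set A := f y q - f 0 0 with hA
  have hyA : y * A ≤ l * |y| * ‖z‖ := by
    have h1 : y * (f y q - f 0 q) ≤ 0 := by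
      have := hMono y 0 q; simpa using this
    have h2 : y * (f 0 q - f 0 0) ≤ l * |y| * ‖z‖ := by
      calc y * (f 0 q - f 0 0) ≤ |y * (f 0 q - f 0 0)| := le_abs_self _
        _ = |y| * |f 0 q - f 0 0| := abs_mul _ _
        _ ≤ |y| * (l * ‖q - 0‖) :=
            mul_le_mul_of_nonneg_left (hLip 0 q 0) (abs_nonneg y)
        _ = |y| * (l * ‖q‖) := by rw [sub_zero]
        _ ≤ |y| * (l * ‖z‖) := by
            apply mul_le_mul_of_nonneg_left _ (abs_nonneg y)
            exact mul_le_mul_of_nonneg_left hqnorm hl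
        _ = l * |y| * ‖z‖ := by ring
    calc y * A = y * (f y q - f 0 q) + y * (f 0 q - f 0 0) := by rw [hA]; ring
      _ ≤ 0 + l * |y| * ‖z‖ := add_le_add h1 h2
      _ = l * |y| * ‖z‖ := by ring
  have hrhs0 : 0 ≤ l * |y| * ‖z‖ := by positivity
  set t := θ y * c with ht
  have ht0 : 0 ≤ t := mul_nonneg (hθ0 y) hc0
  have ht1 : t ≤ 1 := mul_le_one₀ (hθ1 y) hc0 hc1
  have htA : t * (y * A) ≤ l * |y| * ‖z‖ := by
    rcases le_or_gt (y * A) 0 with h | h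
    · exact le_trans (mul_nonpos_of_nonneg_of_nonpos ht0 h) hrhs0
    · calc t * (y * A) ≤ 1 * (y * A) :=
            mul_le_mul_of_nonneg_right ht1 h.le
        _ = y * A := one_mul _
        _ ≤ _ := hyA
  have hyf : y * f 0 0 ≤ |y| * |f 0 0| := by
    calc y * f 0 0 ≤ |y * f 0 0| := le_abs_self _
      _ = |y| * |f 0 0| := abs_mul _ _
  calc y * (θ y * A * c + f 0 0) = t * (y * A) + y * f 0 0 := by ring
    _ ≤ l * |y| * ‖z‖ + |y| * |f 0 0| := add_le_add htA hyf
    _ = |y| * |f 0 0| + l * |y| * ‖z‖ := by ring
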